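/- Let h ∈ ℂ[X] be a polynomial of degree N ≥ 1 and let p ∈ ℂ[X] be a nonzero polynomial of degree kN + l with k ≥ 0 and 0 ≤ l ≤ N−1. Write p uniquely as p(x) = Σ_{j=0}^{N−1} x^j q_j(h(x)). Then deg q_j ≤ k for all 0 ≤ j ≤ N−1, deg q_j ≤ k−1 (i.e. deg q_j < k) for all j with l < j ≤ N−1, and deg q_l = k. -/

import Mathlib

open Polynomial Finset

/-- Let `h ∈ ℂ[X]` have degree `N ≥ 1` and let `p ≠ 0` have degree `kN + l` with `0 ≤ l ≤ N-1`.
If `p(x) = ∑_{j=0}^{N-1} x^j q_j(h(x))`, then `deg q_j ≤ k` for all `j`, `deg q_j < k` for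
`l < j ≤ N-1`, and `deg q_l = k`. -/
theorem stmt2 (N : ℕ) (hN : 1 ≤ N) (h : Polynomial ℂ) (hdeg : h.natDegree = N)
    (p : Polynomial ℂ) (hp : p ≠ 0) (k l : ℕ) (hl : l < N)
    (hpdeg : p.natDegree = k * N + l)
    (q : Fin N → Polynomial ℂ)
    (hq : p = ∑ j : Fin N, X ^ (j : ℕ) * (q j).comp h) :
    (∀ j : Fin N, (q j).degree ≤ (k : ℕ)) ∧
    (∀ j : Fin N, l < (j : ℕ) → (q j).degree < (k : ℕ)) ∧
    (q ⟨l, hl⟩).degree = (k : ℕ) := by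
  have hhC : h ≠ C (h.coeff 0) := by
    intro hc
    rw [hc, natDegree_C] at hdeg
    omega
  have hcomp0 : ∀ j : Fin N, q j ≠ 0 → (q j).comp h ≠ 0 := by
    intro j hj hc
    rcases comp_eq_zero_iff.mp hc with h1 | ⟨_, h2⟩
    · exact hj h1
    · exact hhC h2
  have hfne : ∀ j : Fin N, q j ≠ 0 → X ^ (j : ℕ) * (q j).comp h ≠ 0 := by
    intro j hj
    exact mul_ne_zero (pow_ne_zero _ X_ne_zero) (hcomp0 j hj)
  have key : ∀ j : Fin N, q j ≠ 0 →
      (X ^ (j : ℕ) * (q j).comp h).degree = (((j : ℕ) + (q j).natDegree * N : ℕ) : WithBot ℕ) := by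
    intro j hj
    rw [degree_eq_natDegree (hfne j hj), natDegree_mul (pow_ne_zero _ X_ne_zero) (hcomp0 j hj),
      natDegree_X_pow, natDegree_comp, hdeg]
  have hpair : Set.Pairwise { i : Fin N | i ∈ (univ : Finset (Fin N)) ∧
      X ^ (i : ℕ) * (q i).comp h ≠ 0 } (Function.onFun Ne (degree ∘ fun j => X ^ (j : ℕ) * (q j).comp h)) := by
    intro i hi j hj hij
    have hqi : q i ≠ 0 := by intro h0; exact hi.2 (by rw [h0]; simp)
    have hqj : q j ≠ 0 := by intro h0; exact hj.2 (by rw [h0]; simp)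
    simp only [Function.onFun, Function.comp, key i hqi, key j hqj, Ne, Nat.cast_inj]
    intro he
    apply hij
    have h1 : (i : ℕ) < N := i.2
    have h2 : (j : ℕ) < N := j.2
    have : (q i).natDegree = (q j).natDegree := by
      rcases Nat.lt_trichotomy (q i).natDegree (q j).natDegree with h3 | h3 | h3
      · have := Nat.mul_le_mul_right N (Nat.succ_le_of_lt h3)
        rw [Nat.succ_mul] at this
        omega
      · exact h3
      · have := Nat.mul_le_mul_right N (Nat.succ_le_of_lt h3)
        rw [Nat.succ_mul] at this
        omega
    rw [this] at he
    exact Fin.ext (by omega)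
  have hdsum : p.degree = univ.sup fun j : Fin N => (X ^ (j : ℕ) * (q j).comp h).degree := by
    rw [hq]
    exact degree_sum_eq_of_disjoint _ _ hpair
  have hdp : p.degree = ((k * N + l : ℕ) : WithBot ℕ) := by
    rw [degree_eq_natDegree hp, hpdeg]
  -- the bound for each j
  have hbound : ∀ j : Fin N, q j ≠ 0 → (j : ℕ) + (q j).natDegree * N ≤ k * N + l := by
    intro j hj
    have h1 : (X ^ (j : ℕ) * (q j).comp h).degree ≤ p.degree := by
      rw [hdsum]
      exact Finset.le_sup (f := fun j : Fin N => (X ^ (j : ℕ) * (q j).comp h).degree)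
        (mem_univ j)
    rw [key j hj, hdp] at h1
    exact_mod_cast h1
  have claim1 : ∀ j : Fin N, (q j).degree ≤ (k : ℕ) := by
    intro j
    by_cases hj : q j = 0
    · rw [hj, degree_zero]; exact bot_le
    · rw [degree_eq_natDegree hj]
      have hb := hbound j hj
      have : (q j).natDegree ≤ k := by
        by_contra hcon
        push_neg at hcon
        have := Nat.mul_le_mul_right N (Nat.succ_le_of_lt hcon)
        rw [Nat.succ_mul] at this
        omega
      exact_mod_cast this
  have claim2 : ∀ j : Fin N, l < (j : ℕ) → (q j).degree < (k : ℕ) := by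
    intro j hjl
    by_cases hj : q j = 0
    · rw [hj, degree_zero]; exact WithBot.bot_lt_coe _
    · rw [degree_eq_natDegree hj]
      have hb := hbound j hj
      have : (q j).natDegree < k := by
        by_contra hcon
        push_neg at hcon
        have := Nat.mul_le_mul_right N hcon
        omega
      exact_mod_cast this
  refine ⟨claim1, claim2, ?_⟩
  -- the sup is attained
  have hne : (univ : Finset (Fin N)).Nonempty := ⟨⟨0, by omega⟩, mem_univ _⟩
  obtain ⟨j, -, hjsup⟩ := Finset.exists_mem_eq_sup univ hne
    fun j : Fin N => (X ^ (j : ℕ) * (q j).comp h).degree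
  rw [← hdsum, hdp] at hjsup
  have hqj : q j ≠ 0 := by
    intro h0
    rw [h0, zero_comp, mul_zero, degree_zero] at hjsup
    rw [Nat.cast_withBot] at hjsup
    exact WithBot.coe_ne_bot hjsup
  rw [key j hqj] at hjsup
  have heq : k * N + l = (j : ℕ) + (q j).natDegree * N := by exact_mod_cast hjsup
  have h1 : (j : ℕ) < N := j.2
  have hdk : (q j).natDegree = k := by
    have hle : (q j).natDegree ≤ k := by
      have := claim1 j
      rw [degree_eq_natDegree hqj] at this
      exact_mod_cast this
    by_contra hcon
    have hlt : (q j).natDegree < k := lt_of_le_of_ne hle hcon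
    have := Nat.mul_le_mul_right N (Nat.succ_le_of_lt hlt)
    rw [Nat.succ_mul] at this
    omega
  have hjl : j = ⟨l, hl⟩ := Fin.ext (show (j : ℕ) = l by rw [hdk] at heq; omega)
  rw [← hjl, degree_eq_natDegree hqj, hdk]
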